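/- Let f(x) = ∑_{S ⊆ [n], |S| ≤ k} a_S ∏_{i∈S} x_i be an n-variate multilinear polynomial of degree at most k with real coefficients. Then there exist m = O(k) (one may take m ≤ 2(k+1)) and vectors α, β, c ∈ ℝ^m such that: (i) f˘(y,z) = ∑_{i=1}^m c_i f(α_i y + β_i z) as polynomials in the 2n variables y, z; (ii) ∑_{i=1}^m |c_i| ≤ C·k² for a universal constant C; (iii) |α_i| + |β_i| = 1 for every i ∈ [m]; (iv) |α_i|, |β_i| ≥ 1/(C'·k²) for every i ∈ [m], for a universal constant C'. -/

import Mathlib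

set_option maxHeartbeats 1000000


open Finset Nat

/-- Evaluation of the multilinear polynomial with coefficients `a` at the point `x`. -/
noncomputable def evalPoly {n : ℕ} (a : Finset (Fin n) → ℝ) (x : Fin n → ℝ) : ℝ :=
  ∑ S : Finset (Fin n), a S * ∏ i ∈ S, x i

/-- One-block decoupled version `f˘(y,z) = ∑_S a_S ∑_{i∈S} y_i ∏_{j∈S∖i} z_j`. -/
noncomputable def odec {n : ℕ} (a : Finset (Fin n) → ℝ) (y z : Fin n → ℝ) : ℝ :=
  ∑ S : Finset (Fin n), a S * ∑ i ∈ S, y i * ∏ j ∈ S.erase i, z j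

/-! ### Auxiliary arithmetic lemmas -/

lemma factSq (K J : ℕ) (h : J ≤ K) : K ! * K ! ≤ (K - J)! * (K + J)! := by
  have h1 : K + J ≤ 2 * K := by omega
  have e1 := Nat.choose_mul_factorial_mul_factorial h1
  have e2 := Nat.choose_mul_factorial_mul_factorial (show K ≤ 2 * K by omega)
  have h2 : 2 * K - (K + J) = K - J := by omega
  have h3 : 2 * K - K = K := by omega
  rw [h2] at e1
  rw [h3] at e2
  have hle : (2 * K).choose (K + J) ≤ (2 * K).choose K := by
    have := Nat.choose_le_middle (K + J) (2 * K)
    simpa [show 2 * K / 2 = K by omega] using this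
  have hpos : 0 < (2 * K).choose K := Nat.choose_pos (by omega)
  have : (2 * K).choose K * (K ! * K !) = (2 * K).choose (K + J) * ((K + J)! * (K - J)!) := by
    rw [← mul_assoc, ← mul_assoc, e1, e2]
  have hfin : (2 * K).choose K * (K ! * K !) ≤ (2 * K).choose K * ((K + J)! * (K - J)!) := by
    rw [this]
    exact Nat.mul_le_mul_right _ hle
  have h4 := Nat.le_of_mul_le_mul_left hfin hpos
  calc K ! * K ! ≤ (K + J)! * (K - J)! := h4
    _ = (K - J)! * (K + J)! := Nat.mul_comm _ _

lemma idA (K j : ℕ) (hj : j < K) :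
    (∏ i ∈ (range K).erase j, (i + 1)) * (j + 1) = K ! := by
  rw [← Finset.prod_range_add_one_eq_factorial]
  exact Finset.prod_erase_mul (range K) _ (mem_range.2 hj)

lemma erase_range_eq (K j : ℕ) (hj : j < K) :
    (range K).erase j = range j ∪ Ico (j + 1) K := by
  ext i
  simp only [mem_erase, mem_range, mem_union, mem_Ico]
  omega

lemma idB (K j : ℕ) (hj : j < K) :
    ∏ i ∈ (range K).erase j, Nat.dist i j = j ! * (K - j - 1)! := by
  rw [erase_range_eq K j hj, Finset.prod_union (by
    simp only [Finset.disjoint_left, mem_range, mem_Ico]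
    omega)]
  have h1 : ∏ i ∈ range j, Nat.dist i j = j ! := by
    have : ∀ i ∈ range j, Nat.dist i j = j - i := by
      intro i hi
      rw [Nat.dist_eq_sub_of_le (le_of_lt (mem_range.1 hi))]
    rw [Finset.prod_congr rfl this]
    rw [← Finset.prod_range_add_one_eq_factorial]
    rw [← Finset.prod_range_reflect]
    apply Finset.prod_congr rfl
    intro i hi
    have := mem_range.1 hi
    omega
  have h2 : ∏ i ∈ Ico (j + 1) K, Nat.dist i j = (K - j - 1)! := by
    have : ∀ i ∈ Ico (j + 1) K, Nat.dist i j = i - j := by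
      intro i hi
      rw [Nat.dist_eq_sub_of_le_right]
      exact le_of_lt (mem_Ico.1 hi).1
    rw [Finset.prod_congr rfl this, Finset.prod_Ico_eq_prod_range]
    rw [← Finset.prod_range_add_one_eq_factorial]
    apply Finset.prod_congr (congrArg range (by omega))
    intro i hi
    have := mem_range.1 hi
    omega
  rw [h1, h2]

lemma idC (K j : ℕ) (hj : j < K) :
    ((j + 1)! * (2 * j + 2)) * ∏ i ∈ (range K).erase j, (i + j + 2) = (K + j + 1)! := by
  rw [erase_range_eq K j hj, Finset.prod_union (by
    simp only [Finset.disjoint_left, mem_range, mem_Ico]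
    omega)]
  have h1 : (j + 1)! * ∏ i ∈ range j, (i + j + 2) = (2 * j + 1)! := by
    rw [← Finset.prod_range_add_one_eq_factorial (j+1), ← Finset.prod_range_add_one_eq_factorial (2*j+1)]
    rw [← Finset.prod_range_mul_prod_Ico (fun x => x + 1) (show j + 1 ≤ 2 * j + 1 by omega)]
    congr 1
    rw [Finset.prod_Ico_eq_prod_range]
    apply Finset.prod_congr (congrArg range (by omega))
    intro i hi
    omega
  have h2 : (2 * j + 2)! * ∏ i ∈ Ico (j + 1) K, (i + j + 2) = (K + j + 1)! := by
    rw [← Finset.prod_range_add_one_eq_factorial (2*j+2), ← Finset.prod_range_add_one_eq_factorial (K+j+1)]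
    rw [← Finset.prod_range_mul_prod_Ico (fun x => x + 1) (show 2 * j + 2 ≤ K + j + 1 by omega)]
    congr 1
    rw [Finset.prod_Ico_eq_prod_range, Finset.prod_Ico_eq_prod_range]
    apply Finset.prod_congr (congrArg range (by omega))
    intro i hi
    omega
  have hfac : (2 * j + 2)! = (2 * j + 2) * (2 * j + 1)! := rfl
  calc (j + 1)! * (2 * j + 2) * ((∏ i ∈ range j, (i + j + 2)) * ∏ i ∈ Ico (j + 1) K, (i + j + 2))
      = ((j + 1)! * ∏ i ∈ range j, (i + j + 2)) * (2 * j + 2) * ∏ i ∈ Ico (j + 1) K, (i + j + 2) := by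
        ring
    _ = (2 * j + 1)! * (2 * j + 2) * ∏ i ∈ Ico (j + 1) K, (i + j + 2) := by rw [h1]
    _ = (2 * j + 2)! * ∏ i ∈ Ico (j + 1) K, (i + j + 2) := by rw [hfac]; ring
    _ = (K + j + 1)! := h2

lemma key_nat (K j : ℕ) (hj : j < K) :
    (∏ i ∈ (range K).erase j, (i + 1)) ^ 2
      ≤ 2 * ∏ i ∈ (range K).erase j, (Nat.dist i j * (i + j + 2)) := by
  have hA := idA K j hj
  have hB := idB K j hj
  have hC := idC K j hj
  have hFS := factSq K (j + 1) hj
  have hsub1 : K - (j + 1) = K - j - 1 := by omega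
  have hsub2 : K + (j + 1) = K + j + 1 := by omega
  rw [hsub1, hsub2] at hFS
  rw [Finset.prod_mul_distrib]
  set P1 := ∏ i ∈ (range K).erase j, (i + 1) with hP1
  set PD := ∏ i ∈ (range K).erase j, Nat.dist i j with hPD
  set PS := ∏ i ∈ (range K).erase j, (i + j + 2) with hPS
  -- (K!)^2 * j! ≤ (K-j-1)! * (K+j+1)! * j! = PD * PS * j! * 2 * (j+1)^2
  have key : P1 ^ 2 * ((j + 1) * (j + 1) * j !) ≤ 2 * (PD * PS) * ((j + 1) * (j + 1) * j !) := by
    have e1 : P1 ^ 2 * ((j + 1) * (j + 1) * j !) = (K ! * K !) * j ! := by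
      rw [← hA]; ring
    have e2 : 2 * (PD * PS) * ((j + 1) * (j + 1) * j !) = ((K - j - 1)! * (K + j + 1)!) * j ! := by
      have : (j + 1)! = (j + 1) * j ! := rfl
      calc 2 * (PD * PS) * ((j + 1) * (j + 1) * j !)
          = PD * (((j + 1)! * (2 * j + 2)) * PS) := by rw [this]; ring
        _ = PD * (K + j + 1)! := by rw [hC]
        _ = (j ! * (K - j - 1)!) * (K + j + 1)! := by rw [hB]
        _ = ((K - j - 1)! * (K + j + 1)!) * j ! := by ring
    rw [e1, e2]
    exact Nat.mul_le_mul_right _ hFS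
  have hpos : 0 < (j + 1) * (j + 1) * j ! := by positivity
  exact Nat.le_of_mul_le_mul_right key hpos

lemma key_real (K j : ℕ) (hj : j < K) :
    ∏ i ∈ (range K).erase j, (((i : ℝ) + 1) ^ 2 / |((j : ℝ) + 1) ^ 2 - ((i : ℝ) + 1) ^ 2|)
      ≤ 2 := by
  rw [Finset.prod_div_distrib]
  have hB : ∏ i ∈ (range K).erase j, |((j : ℝ) + 1) ^ 2 - ((i : ℝ) + 1) ^ 2|
      = ((∏ i ∈ (range K).erase j, (Nat.dist i j * (i + j + 2)) : ℕ) : ℝ) := by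
    push_cast
    apply Finset.prod_congr rfl
    intro i hi
    have hij : i ≠ j := (mem_erase.1 hi).1
    rcases lt_or_gt_of_ne hij with h | h
    · rw [Nat.dist_eq_sub_of_le (le_of_lt h)]
      rw [abs_of_nonneg (by
        have : (i : ℝ) + 1 ≤ (j : ℝ) + 1 := by exact_mod_cast by omega
        nlinarith)]
      have : ((j - i : ℕ) : ℝ) = (j : ℝ) - i := by
        have : i ≤ j := le_of_lt h
        push_cast [this]; ring
      rw [this]
      push_cast
      ring
    · rw [Nat.dist_eq_sub_of_le_right (le_of_lt h)]
      rw [abs_of_nonpos (by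
        have : (j : ℝ) + 1 ≤ (i : ℝ) + 1 := by exact_mod_cast by omega
        nlinarith)]
      have : ((i - j : ℕ) : ℝ) = (i : ℝ) - j := by
        have : j ≤ i := le_of_lt h
        push_cast [this]; ring
      rw [this]
      push_cast
      ring
  have hA : ∏ i ∈ (range K).erase j, ((i : ℝ) + 1) ^ 2
      = (((∏ i ∈ (range K).erase j, (i + 1)) ^ 2 : ℕ) : ℝ) := by
    rw [Nat.cast_pow, Nat.cast_prod, ← Finset.prod_pow]
    exact Finset.prod_congr rfl (fun i _ => by push_cast; ring)
  rw [hA, hB]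
  have hBpos : 0 < (∏ i ∈ (range K).erase j, (Nat.dist i j * (i + j + 2)) : ℕ) := by
    apply Finset.prod_pos
    intro i hi
    have hij : i ≠ j := (mem_erase.1 hi).1
    rcases lt_or_gt_of_ne hij with h | h
    · rw [Nat.dist_eq_sub_of_le h.le]
      exact Nat.mul_pos (by omega) (by omega)
    · rw [Nat.dist_eq_sub_of_le_right h.le]
      exact Nat.mul_pos (by omega) (by omega)
  rw [div_le_iff₀ (by exact_mod_cast hBpos)]
  have := key_nat K j hj
  exact_mod_cast by
    calc ((∏ i ∈ (range K).erase j, (i + 1)) ^ 2 : ℕ)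
        ≤ 2 * ∏ i ∈ (range K).erase j, (Nat.dist i j * (i + j + 2)) := this
      _ = 2 * ∏ i ∈ (range K).erase j, (Nat.dist i j * (i + j + 2)) := rfl

lemma sumInvSq (K : ℕ) : ∑ i ∈ range K, (1 : ℝ) / ((i : ℝ) + 1) ^ 2 ≤ 2 := by
  have main : ∀ K : ℕ, ∑ i ∈ range K, (1 : ℝ) / ((i : ℝ) + 1) ^ 2 ≤ 2 - 2 / ((K : ℝ) + 1) := by
    intro K
    induction K with
    | zero => simp
    | succ K ih =>
      rw [Finset.sum_range_succ]
      have hK : (0 : ℝ) < (K : ℝ) + 1 := by positivity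
      have hK2 : (0 : ℝ) < (K : ℝ) + 2 := by positivity
      have step : (1 : ℝ) / ((K : ℝ) + 1) ^ 2 ≤ 2 / ((K : ℝ) + 1) - 2 / ((K : ℝ) + 2) := by
        rw [div_sub_div _ _ (ne_of_gt hK) (ne_of_gt hK2), div_le_div_iff₀ (by positivity) (by positivity)]
        ring_nf
        nlinarith [Nat.cast_nonneg (α := ℝ) K]
      push_cast
      have hrw : ((K : ℝ) + 1 + 1) = (K : ℝ) + 2 := by ring
      rw [hrw]
      linarith
  calc ∑ i ∈ range K, (1 : ℝ) / ((i : ℝ) + 1) ^ 2 ≤ 2 - 2 / ((K : ℝ) + 1) := main K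
    _ ≤ 2 := by
      have : (0 : ℝ) < (K : ℝ) + 1 := by positivity
      have : (0 : ℝ) ≤ 2 / ((K : ℝ) + 1) := by positivity
      linarith

/-! ### Quadrature via Lagrange interpolation -/

open Polynomial in
lemma quad {K : ℕ} (v : Fin K → ℝ) (hv : Function.Injective v) (p : Polynomial ℝ)
    (hp : p.degree < (K : WithBot ℕ)) :
    p.eval 0 = ∑ j, (∏ i ∈ univ.erase j, (0 - v i) / (v j - v i)) * p.eval (v j) := by
  have hvs : Set.InjOn v ↑(univ : Finset (Fin K)) := hv.injOn
  have hcard : p.degree < ((#(univ : Finset (Fin K))) : WithBot ℕ) := by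
    rw [Finset.card_univ, Fintype.card_fin]
    exact hp
  have h := Lagrange.eq_interpolate hvs hcard
  conv_lhs => rw [h]
  rw [Lagrange.interpolate_apply, Polynomial.eval_finset_sum]
  apply Finset.sum_congr rfl
  intro j _
  rw [Polynomial.eval_mul, Polynomial.eval_C, Lagrange.basis, Polynomial.eval_prod, mul_comm]
  congr 1
  apply Finset.prod_congr rfl
  intro i _
  rw [Lagrange.basisDivisor, Polynomial.eval_mul, Polynomial.eval_C, Polynomial.eval_sub,
    Polynomial.eval_X, Polynomial.eval_C, div_eq_inv_mul]

/-! ### The auxiliary polynomial -/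

noncomputable def auxP {n : ℕ} (a : Finset (Fin n) → ℝ) (z w : Fin n → ℝ) : Polynomial ℝ :=
  ∑ S : Finset (Fin n), Polynomial.C (a S) *
    ∏ i ∈ S, (Polynomial.C (z i) + Polynomial.C (w i) * Polynomial.X)

lemma auxP_eval {n : ℕ} (a : Finset (Fin n) → ℝ) (z w : Fin n → ℝ) (t : ℝ) :
    (auxP a z w).eval t = evalPoly a (fun i => z i + w i * t) := by
  rw [auxP, evalPoly, Polynomial.eval_finset_sum]
  apply Finset.sum_congr rfl
  intro S _
  rw [Polynomial.eval_mul, Polynomial.eval_C, Polynomial.eval_prod]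
  congr 1
  apply Finset.prod_congr rfl
  intro i _
  simp

lemma coeff0_prod {n : ℕ} (S : Finset (Fin n)) (z w : Fin n → ℝ) :
    (∏ i ∈ S, (Polynomial.C (z i) + Polynomial.C (w i) * Polynomial.X)).coeff 0
      = ∏ i ∈ S, z i := by
  rw [Polynomial.coeff_zero_eq_eval_zero, Polynomial.eval_prod]
  apply Finset.prod_congr rfl
  intro i _
  simp

lemma coeff1_prod {n : ℕ} (S : Finset (Fin n)) (z w : Fin n → ℝ) :
    (∏ i ∈ S, (Polynomial.C (z i) + Polynomial.C (w i) * Polynomial.X)).coeff 1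
      = ∑ i ∈ S, w i * ∏ j ∈ S.erase i, z j := by
  classical
  induction S using Finset.induction_on with
  | empty => simp [Polynomial.coeff_one]
  | insert a0 S ha ih =>
    rw [Finset.prod_insert ha, Finset.sum_insert ha]
    have expand : (Polynomial.C (z a0) + Polynomial.C (w a0) * Polynomial.X) *
        ∏ i ∈ S, (Polynomial.C (z i) + Polynomial.C (w i) * Polynomial.X)
        = Polynomial.C (z a0) * ∏ i ∈ S, (Polynomial.C (z i) + Polynomial.C (w i) * Polynomial.X)
          + Polynomial.C (w a0) * (Polynomial.X *
            ∏ i ∈ S, (Polynomial.C (z i) + Polynomial.C (w i) * Polynomial.X)) := by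
      ring
    rw [expand, Polynomial.coeff_add, Polynomial.coeff_C_mul, Polynomial.coeff_C_mul,
      Polynomial.coeff_X_mul, coeff0_prod S z w, ih, Finset.erase_insert ha]
    have : ∀ i ∈ S, w i * ∏ j ∈ (insert a0 S).erase i, z j
        = z a0 * (w i * ∏ j ∈ S.erase i, z j) := by
      intro i hi
      have hia : i ≠ a0 := by rintro rfl; exact ha hi
      rw [Finset.erase_insert_of_ne (Ne.symm hia), Finset.prod_insert (fun h => ha (Finset.mem_of_mem_erase h))]
      ring
    rw [Finset.sum_congr rfl this, ← Finset.mul_sum]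
    ring

lemma auxP_coeff0 {n : ℕ} (a : Finset (Fin n) → ℝ) (z w : Fin n → ℝ) :
    (auxP a z w).coeff 0 = ∑ S : Finset (Fin n), a S * ∏ i ∈ S, z i := by
  rw [auxP, Polynomial.finset_sum_coeff]
  apply Finset.sum_congr rfl
  intro S _
  rw [Polynomial.coeff_C_mul, coeff0_prod]

lemma auxP_coeff1 {n : ℕ} (a : Finset (Fin n) → ℝ) (z w : Fin n → ℝ) :
    (auxP a z w).coeff 1 = ∑ S : Finset (Fin n), a S * ∑ i ∈ S, w i * ∏ j ∈ S.erase i, z j := by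
  rw [auxP, Polynomial.finset_sum_coeff]
  apply Finset.sum_congr rfl
  intro S _
  rw [Polynomial.coeff_C_mul, coeff1_prod]

lemma auxP_degree {n k : ℕ} (a : Finset (Fin n) → ℝ) (z w : Fin n → ℝ)
    (ha : ∀ S : Finset (Fin n), k < S.card → a S = 0) :
    (auxP a z w).degree ≤ (k : WithBot ℕ) := by
  rw [auxP]
  apply (Polynomial.degree_sum_le _ _).trans
  apply Finset.sup_le
  intro S _
  by_cases hS : S.card ≤ k
  · calc (Polynomial.C (a S) *
        ∏ i ∈ S, (Polynomial.C (z i) + Polynomial.C (w i) * Polynomial.X)).degree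
        ≤ (Polynomial.C (a S)).degree
          + (∏ i ∈ S, (Polynomial.C (z i) + Polynomial.C (w i) * Polynomial.X)).degree :=
          Polynomial.degree_mul_le _ _
      _ ≤ 0 + ∑ i ∈ S, (1 : WithBot ℕ) := by
          apply _root_.add_le_add Polynomial.degree_C_le
          apply (Polynomial.degree_prod_le _ _).trans
          apply Finset.sum_le_sum
          intro i _
          apply (Polynomial.degree_add_le _ _).trans
          apply max_le (Polynomial.degree_C_le.trans (by norm_num))
            (Polynomial.degree_C_mul_X_le _)
      _ = (S.card : WithBot ℕ) := by
          rw [zero_add, Finset.sum_const, nsmul_eq_mul, mul_one]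
      _ ≤ (k : WithBot ℕ) := by exact_mod_cast hS
  · rw [ha S (by omega), Polynomial.C_0, zero_mul, Polynomial.degree_zero]
    exact bot_le

/-! ### transfer products over `Fin K` to products over `range K` -/

lemma prod_erase_fin {K : ℕ} (j : Fin K) (f : ℕ → ℝ) :
    ∏ i ∈ (univ : Finset (Fin K)).erase j, f (i : ℕ)
      = ∏ t ∈ (range K).erase (j : ℕ), f t := by
  apply Finset.prod_bij (fun (a : Fin K) _ => (a : ℕ))
  · intro a ha
    simp only [mem_erase, mem_range]
    exact ⟨fun h => (mem_erase.1 ha).1 (Fin.ext h), a.isLt⟩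
  · intro a₁ h₁ a₂ h₂ h
    exact Fin.ext h
  · intro b hb
    have hb' := mem_erase.1 hb
    have hbK : b < K := mem_range.1 hb'.2
    refine ⟨⟨b, hbK⟩, ?_, rfl⟩
    simp only [mem_erase, mem_univ, and_true]
    intro h
    exact hb'.1 (by rw [← h])
  · intro a _
    rfl

theorem stmt1 :
    ∃ C C' : ℝ, 0 < C ∧ 0 < C' ∧
      ∀ (n k : ℕ) (a : Finset (Fin n) → ℝ),
        (∀ S : Finset (Fin n), k < S.card → a S = 0) →
        ∃ (m : ℕ) (α β c : Fin m → ℝ),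
          m ≤ 2 * (k + 1) ∧
          (∀ y z : Fin n → ℝ,
            odec a y z = ∑ i, c i * evalPoly a (fun j => α i * y j + β i * z j)) ∧
          (∑ i, |c i|) ≤ C * (k : ℝ) ^ 2 ∧
          (∀ i, |α i| + |β i| = 1) ∧
          (∀ i, 1 / (C' * (k : ℝ) ^ 2) ≤ |α i| ∧ 1 / (C' * (k : ℝ) ^ 2) ≤ |β i|) := by
  classical
  refine ⟨36, 9, by norm_num, by norm_num, ?_⟩
  intro n k a ha
  rcases Nat.eq_zero_or_pos k with hk0 | hk
  · -- k = 0 : the decoupled polynomial is zero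
    subst hk0
    refine ⟨0, Fin.elim0, Fin.elim0, Fin.elim0, by omega, ?_, ?_, fun i => i.elim0,
      fun i => i.elim0⟩
    · intro y z
      have hodec : odec a y z = 0 := by
        rw [odec]
        apply Finset.sum_eq_zero
        intro S _
        rcases Finset.eq_empty_or_nonempty S with rfl | hS
        · simp
        · rw [ha S (by simpa using Finset.card_pos.2 hS)]
          simp
      rw [hodec]
      simp
    · simp
  · -- k ≥ 1
    set K := k + 1 with hK
    set ε : Fin K → ℝ := fun j => ((j : ℝ) + 1) ^ 2 / ((K : ℝ) + 1) ^ 2 with hε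
    have hKpos : (0 : ℝ) < (K : ℝ) + 1 := by positivity
    have hεpos : ∀ j, 0 < ε j := by
      intro j
      rw [hε]
      positivity
    have hεlt1 : ∀ j, ε j < 1 := by
      intro j
      rw [hε]
      rw [div_lt_one (by positivity)]
      have : (j : ℝ) + 1 < (K : ℝ) + 1 := by
        have := j.isLt
        exact_mod_cast by exact_mod_cast Nat.add_lt_add_right this 1
      nlinarith [show (0:ℝ) ≤ (j:ℝ) + 1 by positivity]
    have hεinj : Function.Injective ε := by
      intro i j h
      rw [hε] at h
      simp only at h
      have hD : ((K : ℝ) + 1) ^ 2 ≠ 0 := by positivity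
      have : (i : ℕ) = (j : ℕ) := by
        field_simp at h
        have h2 := (pow_left_inj₀ (by positivity) (by positivity) two_ne_zero).mp h
        exact_mod_cast add_right_cancel h2
      exact Fin.ext this
    set W : Fin K → ℝ := fun j => ∏ i ∈ (univ : Finset (Fin K)).erase j,
      (0 - ε i) / (ε j - ε i) with hWdef
    have hW : ∀ j, |W j| ≤ 2 := by
      intro j
      rw [hWdef]
      simp only
      rw [abs_prod]
      have h1 : ∀ i ∈ (univ : Finset (Fin K)).erase j,
          |(0 - ε i) / (ε j - ε i)|
            = ((i : ℝ) + 1) ^ 2 / |((j : ℝ) + 1) ^ 2 - ((i : ℝ) + 1) ^ 2| := by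
        intro i hi
        have hij : i ≠ j := (mem_erase.1 hi).1
        have hnum : ((j : ℝ) + 1) ^ 2 - ((i : ℝ) + 1) ^ 2 ≠ 0 := by
          rw [sub_ne_zero]
          intro h0
          apply hij
          apply hεinj
          simp only [hε]
          rw [h0]
        have hKne : ((K : ℝ) + 1) ^ 2 ≠ 0 := by positivity
        have key : (0 - ε i) / (ε j - ε i)
            = -(((i : ℝ) + 1) ^ 2 / (((j : ℝ) + 1) ^ 2 - ((i : ℝ) + 1) ^ 2)) := by
          simp only [hε]
          field_simp
          ring
        rw [key, abs_neg, abs_div, abs_of_nonneg (by positivity : (0:ℝ) ≤ ((i : ℝ) + 1) ^ 2)]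
      rw [Finset.prod_congr rfl h1]
      have := key_real K (j : ℕ) j.isLt
      calc ∏ i ∈ (univ : Finset (Fin K)).erase j,
            ((i : ℝ) + 1) ^ 2 / |((j : ℝ) + 1) ^ 2 - ((i : ℝ) + 1) ^ 2|
          = ∏ t ∈ (range K).erase (j : ℕ),
            ((t : ℝ) + 1) ^ 2 / |((j : ℝ) + 1) ^ 2 - ((t : ℝ) + 1) ^ 2| :=
            prod_erase_fin j (fun t => ((t : ℝ) + 1) ^ 2 / |((j : ℝ) + 1) ^ 2 - ((t : ℝ) + 1) ^ 2|)
        _ ≤ 2 := this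
    -- the coefficients
    refine ⟨K + K, Fin.addCases (fun j => ε j) (fun j => -ε j),
      Fin.addCases (fun j => 1 - ε j) (fun j => 1 - ε j),
      Fin.addCases (fun j => W j / (2 * ε j)) (fun j => -(W j / (2 * ε j))),
      by omega, ?_, ?_, ?_, ?_⟩
    · -- the decoupling identity
      intro y z
      set Pp := auxP a z (fun i => y i - z i) with hPp
      set Pm := auxP a z (fun i => -y i - z i) with hPm
      set Q := Pp - Pm with hQdef
      have hQ1 : Q.coeff 1 = 2 * odec a y z := by
        rw [hQdef, Polynomial.coeff_sub, hPp, hPm, auxP_coeff1, auxP_coeff1, odec,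
          ← Finset.sum_sub_distrib, Finset.mul_sum]
        apply Finset.sum_congr rfl
        intro S _
        rw [← mul_sub, ← Finset.sum_sub_distrib]
        have : ∀ i ∈ S, (y i - z i) * ∏ j ∈ S.erase i, z j
            - (-y i - z i) * ∏ j ∈ S.erase i, z j = 2 * (y i * ∏ j ∈ S.erase i, z j) := by
          intro i _
          ring
        rw [Finset.sum_congr rfl this, ← Finset.mul_sum]
        ring
      have hQ0 : Q.coeff 0 = 0 := by
        rw [hQdef, Polynomial.coeff_sub, hPp, hPm, auxP_coeff0, auxP_coeff0, sub_self]
      have hQdeg : Q.degree < (K : WithBot ℕ) := by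
        have h1 := auxP_degree a z (fun i => y i - z i) ha
        have h2 := auxP_degree a z (fun i => -y i - z i) ha
        have := (Polynomial.degree_sub_le Pp Pm).trans (max_le h1 h2)
        apply lt_of_le_of_lt this
        exact_mod_cast WithBot.coe_lt_coe.2 (by omega)
      set Ψ := Q.divX with hΨdef
      have hΨdeg : Ψ.degree < (K : WithBot ℕ) := by
        by_cases hQ : Q = 0
        · rw [hΨdef, hQ]
          simp only [Polynomial.divX_zero, Polynomial.degree_zero]
          exact WithBot.bot_lt_coe _
        · exact lt_trans (Polynomial.degree_divX_lt hQ) hQdeg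
      have hΨ0 : Ψ.eval 0 = 2 * odec a y z := by
        rw [← Polynomial.coeff_zero_eq_eval_zero, hΨdef, Polynomial.coeff_divX, hQ1]
      have hQΨ : ∀ t : ℝ, Q.eval t = Ψ.eval t * t := by
        intro t
        conv_lhs => rw [← Polynomial.divX_mul_X_add Q]
        rw [hQ0]
        simp [hΨdef]
      have hquad := quad ε hεinj Ψ hΨdeg
      rw [hΨ0] at hquad
      -- RHS of goal
      rw [Fin.sum_univ_add]
      simp only [Fin.addCases_left, Fin.addCases_right]
      have hPpEval : ∀ j : Fin K,
          evalPoly a (fun i => ε j * y i + (1 - ε j) * z i) = Pp.eval (ε j) := by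
        intro j
        rw [hPp, auxP_eval]
        congr 1
        funext i
        ring
      have hPmEval : ∀ j : Fin K,
          evalPoly a (fun i => -ε j * y i + (1 - ε j) * z i) = Pm.eval (ε j) := by
        intro j
        rw [hPm, auxP_eval]
        congr 1
        funext i
        ring
      calc odec a y z
          = (2 * odec a y z) / 2 := by ring
        _ = (∑ j : Fin K, W j * Ψ.eval (ε j)) / 2 := by rw [← hquad]
        _ = ∑ j : Fin K, (W j / (2 * ε j) * Pp.eval (ε j)
              + -(W j / (2 * ε j)) * Pm.eval (ε j)) := by
            rw [Finset.sum_div]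
            apply Finset.sum_congr rfl
            intro j _
            have hne : ε j ≠ 0 := ne_of_gt (hεpos j)
            have hd : Pp.eval (ε j) - Pm.eval (ε j) = Ψ.eval (ε j) * ε j := by
              rw [← hQΨ (ε j), hQdef]
              simp
            rw [show W j / (2 * ε j) * Pp.eval (ε j) + -(W j / (2 * ε j)) * Pm.eval (ε j)
                = W j / (2 * ε j) * (Pp.eval (ε j) - Pm.eval (ε j)) from by ring, hd]
            field_simp
        _ = ∑ j : Fin K, W j / (2 * ε j) * Pp.eval (ε j)
              + ∑ j : Fin K, -(W j / (2 * ε j)) * Pm.eval (ε j) := Finset.sum_add_distrib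
        _ = (∑ j : Fin K, W j / (2 * ε j)
                * evalPoly a fun i => ε j * y i + (1 - ε j) * z i)
              + ∑ j : Fin K, -(W j / (2 * ε j))
                * evalPoly a fun i => -ε j * y i + (1 - ε j) * z i := by
            congr 1
            · exact Finset.sum_congr rfl fun j _ => by rw [hPpEval j]
            · exact Finset.sum_congr rfl fun j _ => by rw [hPmEval j]
    · -- the ℓ¹ bound on coefficients
      rw [Fin.sum_univ_add]
      simp only [Fin.addCases_left, Fin.addCases_right, abs_neg]
      have hterm : ∀ j : Fin K, |W j / (2 * ε j)|
          ≤ ((K : ℝ) + 1) ^ 2 * (1 / ((j : ℝ) + 1) ^ 2) := by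
        intro j
        rw [abs_div, abs_of_pos (show (0:ℝ) < 2 * ε j by positivity)]
        rw [div_le_iff₀ (by positivity)]
        have : ε j = ((j : ℝ) + 1) ^ 2 / ((K : ℝ) + 1) ^ 2 := rfl
        rw [this]
        have hj1 : (0:ℝ) < ((j : ℝ) + 1) ^ 2 := by positivity
        calc |W j| ≤ 2 := hW j
          _ = ((K : ℝ) + 1) ^ 2 * (1 / ((j : ℝ) + 1) ^ 2)
              * (2 * (((j : ℝ) + 1) ^ 2 / ((K : ℝ) + 1) ^ 2)) := by
            field_simp

      have hsum : ∑ j : Fin K, (1 : ℝ) / ((j : ℝ) + 1) ^ 2 ≤ 2 := by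
        rw [Fin.sum_univ_eq_sum_range (fun t => (1 : ℝ) / ((t : ℝ) + 1) ^ 2)]
        exact sumInvSq K
      have hbound : ∑ j : Fin K, |W j / (2 * ε j)| ≤ 2 * ((K : ℝ) + 1) ^ 2 := by
        calc ∑ j : Fin K, |W j / (2 * ε j)|
            ≤ ∑ j : Fin K, ((K : ℝ) + 1) ^ 2 * (1 / ((j : ℝ) + 1) ^ 2) :=
              Finset.sum_le_sum fun j _ => hterm j
          _ = ((K : ℝ) + 1) ^ 2 * ∑ j : Fin K, (1 : ℝ) / ((j : ℝ) + 1) ^ 2 := by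
              rw [Finset.mul_sum]
          _ ≤ ((K : ℝ) + 1) ^ 2 * 2 := by
              apply mul_le_mul_of_nonneg_left hsum (by positivity)
          _ = 2 * ((K : ℝ) + 1) ^ 2 := by ring
      have hk1 : (1 : ℝ) ≤ (k : ℝ) := by exact_mod_cast hk
      have hKk : ((K : ℝ) + 1) = (k : ℝ) + 2 := by
        rw [hK]
        push_cast
        ring
      calc ∑ j : Fin K, |W j / (2 * ε j)| + ∑ j : Fin K, |W j / (2 * ε j)|
          ≤ 2 * ((K : ℝ) + 1) ^ 2 + 2 * ((K : ℝ) + 1) ^ 2 := add_le_add hbound hbound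
        _ = 4 * ((k : ℝ) + 2) ^ 2 := by rw [hKk]; ring
        _ ≤ 36 * (k : ℝ) ^ 2 := by nlinarith
    · -- |α| + |β| = 1
      intro i
      induction i using Fin.addCases with
      | left j =>
        simp only [Fin.addCases_left]
        rw [abs_of_pos (hεpos j), abs_of_pos (by linarith [hεlt1 j] : (0:ℝ) < 1 - ε j)]
        ring
      | right j =>
        simp only [Fin.addCases_right]
        rw [abs_neg, abs_of_pos (hεpos j), abs_of_pos (by linarith [hεlt1 j] : (0:ℝ) < 1 - ε j)]
        ring
    · -- lower bounds on |α|, |β|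
      have hk1 : (1 : ℝ) ≤ (k : ℝ) := by exact_mod_cast hk
      have hKk : ((K : ℝ) + 1) = (k : ℝ) + 2 := by
        rw [hK]; push_cast; ring
      have hKr : (K : ℝ) = (k : ℝ) + 1 := by rw [hK]; push_cast; ring
      have hαbound : ∀ j : Fin K, 1 / (9 * (k : ℝ) ^ 2) ≤ ε j := by
        intro j
        have h1 : ε j = ((j : ℝ) + 1) ^ 2 / ((K : ℝ) + 1) ^ 2 := rfl
        rw [h1, hKk]
        rw [div_le_div_iff₀ (by nlinarith) (by positivity)]
        have hj : (1 : ℝ) ≤ (j : ℝ) + 1 := by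
          have : (0:ℝ) ≤ (j : ℝ) := Nat.cast_nonneg _
          linarith
        have hjj : (1 : ℝ) ≤ ((j : ℝ) + 1) ^ 2 := by nlinarith
        have h9 : ((k : ℝ) + 2) ^ 2 ≤ 9 * (k : ℝ) ^ 2 := by nlinarith
        nlinarith [mul_le_mul_of_nonneg_right hjj (show (0:ℝ) ≤ 9 * (k : ℝ) ^ 2 by positivity)]
      have hβbound : ∀ j : Fin K, 1 / (9 * (k : ℝ) ^ 2) ≤ 1 - ε j := by
        intro j
        have h1 : ε j = ((j : ℝ) + 1) ^ 2 / ((K : ℝ) + 1) ^ 2 := rfl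
        have hjK : (j : ℝ) + 1 ≤ (K : ℝ) := by
          have := j.isLt
          exact_mod_cast Nat.succ_le_of_lt this
        have h2 : ε j ≤ ((k : ℝ) + 1) ^ 2 / ((k : ℝ) + 2) ^ 2 := by
          rw [h1, hKk]
          rw [div_le_div_iff₀ (by positivity) (by positivity)]
          have hle : (j : ℝ) + 1 ≤ (k : ℝ) + 1 := by rw [← hKr]; exact hjK
          have hsq : ((j : ℝ) + 1) ^ 2 ≤ ((k : ℝ) + 1) ^ 2 := by
            nlinarith [show (0:ℝ) ≤ (j:ℝ) + 1 by positivity]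
          nlinarith [mul_le_mul_of_nonneg_right hsq (show (0:ℝ) ≤ ((k:ℝ)+2)^2 by positivity)]
        have h3 : 1 - ((k : ℝ) + 1) ^ 2 / ((k : ℝ) + 2) ^ 2
            = (2 * (k : ℝ) + 3) / ((k : ℝ) + 2) ^ 2 := by
          field_simp
          ring
        have hk0 : (0:ℝ) < (k : ℝ) := by exact_mod_cast hk
        have h9pos : (0:ℝ) < 9 * (k : ℝ) ^ 2 := by
          have := mul_pos hk0 hk0
          nlinarith
        have h4 : 1 / (9 * (k : ℝ) ^ 2) ≤ (2 * (k : ℝ) + 3) / ((k : ℝ) + 2) ^ 2 := by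
          rw [div_le_div_iff₀ h9pos (by positivity)]
          have h9 : ((k : ℝ) + 2) ^ 2 ≤ 9 * (k : ℝ) ^ 2 := by nlinarith
          have h23 : (1:ℝ) ≤ 2 * (k : ℝ) + 3 := by linarith
          calc 1 * ((k : ℝ) + 2) ^ 2 = 1 * ((k : ℝ) + 2) ^ 2 := rfl
            _ ≤ (2 * (k : ℝ) + 3) * (9 * (k : ℝ) ^ 2) :=
              mul_le_mul h23 h9 (by positivity) (by linarith)
        linarith
      intro i
      induction i using Fin.addCases with
      | left j =>
        simp only [Fin.addCases_left]
        rw [abs_of_pos (hεpos j), abs_of_pos (by linarith [hεlt1 j] : (0:ℝ) < 1 - ε j)]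
        exact ⟨hαbound j, hβbound j⟩
      | right j =>
        simp only [Fin.addCases_right]
        rw [abs_neg, abs_of_pos (hεpos j), abs_of_pos (by linarith [hεlt1 j] : (0:ℝ) < 1 - ε j)]
        exact ⟨hαbound j, hβbound j⟩
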